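/- Let G be a bidirected graph (orientation of a signed graph) in which every edge is introverted or extroverted (equivalently, every adjacency is negative). Then the permanent of the Laplacian L = H·Hᵀ equals the total number of contributors of G: perm(L) = |𝔠(G)|. -/
import Mathlib


open Matrix

/-- The incidence matrix of a bidirected graph: each edge `e` has endpoints `v1 e ≠ v2 e`
with incidence signs `s1 e`, `s2 e ∈ {±1}`. -/
def incMat {V E : Type*} [DecidableEq V] (v1 v2 : E → V) (s1 s2 : E → ℤ) : Matrix V E ℤ :=
  Matrix.of fun v e => (if v1 e = v then s1 e else 0) + (if v2 e = v then s2 e else 0)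

/-- A contributor: each vertex `v` is assigned a step consisting of an edge `(c v).1` together
with an entry incidence (chosen by `(c v).2.1`) located at `v` and an exit incidence (chosen by
`(c v).2.2`) of the same edge; the head of the step at `v` is the endpoint of the exit
incidence (equal to `v` for a backstep), and the heads must cover the vertices bijectively. -/
def IsContributor {V E : Type*} (v1 v2 : E → V) (c : V → E × Bool × Bool) : Prop :=
  (∀ v, (if (c v).2.1 then v1 (c v).1 else v2 (c v).1) = v) ∧
    Function.Bijective fun v => if (c v).2.2 then v1 (c v).1 else v2 (c v).1

/-- For a bidirected graph with no isolated vertices in which every edge is introverted or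
extroverted (equivalently, every adjacency is negative), the permanent of the Laplacian
`L = H·Hᵀ` equals the number of contributors. -/
theorem permanent_laplacian_eq_card_contributors {V E : Type*} [Fintype V] [Fintype E]
    [DecidableEq V] (v1 v2 : E → V) (s1 s2 : E → ℤ)
    (hs1 : ∀ e, s1 e = 1 ∨ s1 e = -1) (hs2 : ∀ e, s2 e = 1 ∨ s2 e = -1)
    (hloop : ∀ e, v1 e ≠ v2 e)
    (hiso : ∀ v, ∃ e, v1 e = v ∨ v2 e = v)
    (hintroext : ∀ e, s1 e = s2 e) :
    Matrix.permanent (incMat v1 v2 s1 s2 * (incMat v1 v2 s1 s2)ᵀ) =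
      Nat.card {c : V → E × Bool × Bool // IsContributor v1 v2 c} := by
  classical
  set H := incMat v1 v2 s1 s2 with hHdef
  have hne1 : ∀ v e, v1 e = v → v2 e ≠ v := fun v e h h' => hloop e (h.trans h'.symm)
  have hne2 : ∀ v e, v2 e = v → v1 e ≠ v := fun v e h h' => hloop e (h'.trans h.symm)
  have hHval : ∀ v e, (v1 e = v ∨ v2 e = v) → H v e = s1 e := by
    intro v e h
    rcases h with h | h
    · simp [hHdef, incMat, h, hne1 v e h]
    · simp [hHdef, incMat, h, hne2 v e h, hintroext e]
  have hHzero : ∀ v e, ¬(v1 e = v ∨ v2 e = v) → H v e = 0 := by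
    intro v e h
    push_neg at h
    simp [hHdef, incMat, h.1, h.2]
  set P : Equiv.Perm V × (V → E) → Prop := fun p =>
    ∀ v, (v1 (p.2 v) = v ∨ v2 (p.2 v) = v) ∧ (v1 (p.2 v) = p.1 v ∨ v2 (p.2 v) = p.1 v)
    with hPdef
  -- LHS computation
  have key : ∀ (σ : Equiv.Perm V) (f : V → E),
      (∏ v, H (σ v) (f v) * H v (f v)) = if P (σ, f) then 1 else 0 := by
    intro σ f
    have : ∀ v, H (σ v) (f v) * H v (f v) =
        if (v1 (f v) = v ∨ v2 (f v) = v) ∧ (v1 (f v) = σ v ∨ v2 (f v) = σ v)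
        then 1 else 0 := by
      intro v
      by_cases h1 : v1 (f v) = v ∨ v2 (f v) = v
      · by_cases h2 : v1 (f v) = σ v ∨ v2 (f v) = σ v
        · rw [hHval _ _ h2, hHval _ _ h1]
          rcases hs1 (f v) with h | h <;> simp [h, h1, h2]
        · rw [hHzero _ _ h2]
          simp [h2]
      · rw [hHzero _ _ h1]
        simp [h1]
    rw [Finset.prod_congr rfl fun v _ => this v, Finset.prod_boole]
    simp [hPdef]
  have hLHS : Matrix.permanent (H * Hᵀ) =
      ((Finset.univ.filter P).card : ℤ) := by
    rw [Matrix.permanent]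
    have : ∀ σ : Equiv.Perm V, (∏ v, (H * Hᵀ) (σ v) v) =
        ∑ f : V → E, if P (σ, f) then (1 : ℤ) else 0 := by
      intro σ
      have h1 : (∏ v, (H * Hᵀ) (σ v) v) = ∏ v, ∑ e, H (σ v) e * H v e := by
        simp [Matrix.mul_apply, Matrix.transpose_apply]
      rw [h1, Finset.prod_univ_sum]
      simp only [Fintype.piFinset_univ]
      exact Finset.sum_congr rfl fun f _ => key σ f
    rw [Finset.sum_congr rfl fun σ _ => this σ, ← Fintype.sum_prod_type']
    rw [Finset.sum_boole]
  -- RHS: build an equivalence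
  have e : {c : V → E × Bool × Bool // IsContributor v1 v2 c} ≃ {p // P p} := by
    refine
      { toFun := fun c => ⟨(Equiv.ofBijective _ c.2.2, fun v => (c.1 v).1), ?_⟩
        invFun := fun p => ⟨fun v => (p.1.2 v, decide (v1 (p.1.2 v) = v),
            decide (v1 (p.1.2 v) = p.1.1 v)), ?_, ?_⟩
        left_inv := ?_
        right_inv := ?_ }
    · intro v
      constructor
      · have h := c.2.1 v
        by_cases hb : (c.1 v).2.1
        · rw [if_pos hb] at h; exact Or.inl h
        · rw [if_neg hb] at h; exact Or.inr h
      · simp only [Equiv.ofBijective_apply]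
        by_cases hb : (c.1 v).2.2
        · rw [if_pos hb]; exact Or.inl rfl
        · rw [if_neg hb]; exact Or.inr rfl
    · intro v
      simp only [decide_eq_true_eq]
      by_cases h : v1 (p.1.2 v) = v
      · simp [h]
      · have h' := (p.2 v).1.resolve_left h
        simp [h, h']
    · have hfun : (fun v => if decide (v1 (p.1.2 v) = p.1.1 v) = true
          then v1 (p.1.2 v) else v2 (p.1.2 v)) = fun v => p.1.1 v := by
        funext v
        by_cases h : v1 (p.1.2 v) = p.1.1 v
        · simp [h]
        · have h' := (p.2 v).2.resolve_left h
          simp [h, h']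
      show Function.Bijective _
      simp only [hfun]
      exact p.1.1.bijective
    · rintro ⟨c, hc⟩
      apply Subtype.ext
      funext v
      refine Prod.ext rfl (Prod.ext ?_ ?_)
      · show decide (v1 (c v).1 = v) = (c v).2.1
        have h := hc.1 v
        by_cases hb : (c v).2.1
        · rw [if_pos hb] at h; simp [hb, h]
        · rw [if_neg hb] at h
          have : v1 (c v).1 ≠ v := hne2 _ _ h
          simp [hb, this]
      · show decide (v1 (c v).1 =
            Equiv.ofBijective _ hc.2 v) = (c v).2.2
        have : (Equiv.ofBijective _ hc.2) v
            = (if (c v).2.2 then v1 (c v).1 else v2 (c v).1) := rfl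
        rw [this]
        by_cases hb : (c v).2.2
        · simp [hb]
        · rw [if_neg hb]
          have : v1 (c v).1 ≠ v2 (c v).1 := hloop _
          simp [hb, this]
    · rintro ⟨⟨σ, f⟩, hp⟩
      apply Subtype.ext
      refine Prod.ext ?_ rfl
      apply Equiv.ext
      intro v
      show (if decide (v1 (f v) = σ v) = true then v1 (f v) else v2 (f v)) = σ v
      by_cases h : v1 (f v) = σ v
      · simp [h]
      · have h' := (hp v).2.resolve_left h
        simp [h, h']
  have hRHS : Nat.card {c : V → E × Bool × Bool // IsContributor v1 v2 c}
      = (Finset.univ.filter P).card := by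
    rw [Nat.card_congr e, Nat.card_eq_fintype_card, Fintype.card_subtype]
  rw [hLHS, hRHS]
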